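/- For every positive integer k and every i ∈ {1,...,k}, the number 4·cos²(πi/(2k+1)) is a Laplacian eigenvalue of any graph G with multiplicity at least p_k(G) − q_k(G), where p_k(G) is the number of pendant paths of length k in G and q_k(G) is the number of vertices of degree at least 3 that are an end vertex of some pendant path of length k. -/

import Mathlib

open Matrix SimpleGraph Real

noncomputable def mult {m : Type*} [Fintype m] [DecidableEq m]
    (M : Matrix m m ℝ) (μ : ℝ) : ℕ :=
  Module.finrank ℝ (Module.End.eigenspace (Matrix.toLin' M) μ)

def IsPendantPath {n : ℕ} (G : SimpleGraph (Fin n)) [DecidableRel G.Adj] (k : ℕ)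
    (w : Fin (k + 1) → Fin n) : Prop :=
  Function.Injective w ∧
  (∀ i : Fin k, G.Adj (w i.castSucc) (w i.succ)) ∧
  G.degree (w 0) = 1 ∧
  (∀ i : Fin (k + 1), i ≠ 0 → i ≠ Fin.last k → G.degree (w i) = 2) ∧
  2 < G.degree (w (Fin.last k))

/-- `pk G k` is the number of pendant paths of length `k` in `G`. -/
noncomputable def pk {n : ℕ} (G : SimpleGraph (Fin n)) [DecidableRel G.Adj] (k : ℕ) : ℕ :=
  Nat.card {w : Fin (k + 1) → Fin n // IsPendantPath G k w}

/-- `qk G k` is the number of vertices of degree greater than two that are end vertices of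
some pendant path of length `k` in `G`. -/
noncomputable def qk {n : ℕ} (G : SimpleGraph (Fin n)) [DecidableRel G.Adj] (k : ℕ) : ℕ :=
  Nat.card {v : Fin n // 2 < G.degree v ∧
    ∃ w : Fin (k + 1) → Fin n, IsPendantPath G k w ∧ w (Fin.last k) = v}

namespace Stmt8Aux

variable {n : ℕ} {G : SimpleGraph (Fin n)} [DecidableRel G.Adj] {k : ℕ}
variable {w w' : Fin (k + 1) → Fin n}

lemma adj_succ (hw : IsPendantPath G k w) {j : ℕ} (hj : j < k) :
    G.Adj (w ⟨j, by omega⟩) (w ⟨j + 1, by omega⟩) := hw.2.1 ⟨j, hj⟩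

lemma w_ne (hw : IsPendantPath G k w) {a b : ℕ} {ha : a < k + 1} {hb : b < k + 1}
    (hab : a ≠ b) : w ⟨a, ha⟩ ≠ w ⟨b, hb⟩ :=
  fun h => hab (by simpa [Fin.ext_iff] using hw.1 h)

lemma deg0 (hw : IsPendantPath G k w) : G.degree (w ⟨0, Nat.succ_pos k⟩) = 1 := by
  have e : (⟨0, Nat.succ_pos k⟩ : Fin (k + 1)) = 0 := Fin.ext (by simp)
  rw [e]; exact hw.2.2.1

lemma deg_mid (hw : IsPendantPath G k w) {j : ℕ} (h1 : 1 ≤ j) (h2 : j < k) :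
    G.degree (w ⟨j, by omega⟩) = 2 :=
  hw.2.2.2.1 ⟨j, by omega⟩
    (by simp only [ne_eq, Fin.ext_iff, Fin.val_zero]; omega)
    (by simp only [ne_eq, Fin.ext_iff, Fin.val_last]; omega)

lemma nbhd_zero (hw : IsPendantPath G k w) (hk : 1 ≤ k) :
    G.neighborFinset (w ⟨0, Nat.succ_pos k⟩) = {w ⟨1, by omega⟩} := by
  refine (Finset.eq_of_subset_of_card_le ?_ ?_).symm
  · intro u hu
    rw [Finset.mem_singleton] at hu
    subst hu
    rw [SimpleGraph.mem_neighborFinset]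
    exact adj_succ hw (by omega)
  · rw [Finset.card_singleton]
    exact le_of_eq (deg0 hw)

lemma nbhd_mid (hw : IsPendantPath G k w) {j : ℕ} (h1 : 1 ≤ j) (h2 : j < k) :
    G.neighborFinset (w ⟨j, by omega⟩) =
      {w ⟨j - 1, by omega⟩, w ⟨j + 1, by omega⟩} := by
  refine (Finset.eq_of_subset_of_card_le ?_ ?_).symm
  · intro u hu
    simp only [Finset.mem_insert, Finset.mem_singleton] at hu
    rw [SimpleGraph.mem_neighborFinset]
    rcases hu with h | h <;> subst h
    · have h' := adj_succ hw (show j - 1 < k by omega)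
      have hj' : (⟨j - 1 + 1, by omega⟩ : Fin (k+1)) = ⟨j, by omega⟩ := by
        simp only [Fin.ext_iff]; omega
      rw [hj'] at h'
      exact h'.symm
    · exact adj_succ hw h2
  · have hcard : ({w ⟨j - 1, by omega⟩, w ⟨j + 1, by omega⟩} : Finset (Fin n)).card = 2 := by
      rw [Finset.card_pair (w_ne hw (by omega))]
    rw [hcard]
    exact le_of_eq (deg_mid hw h1 h2)

lemma pendant_unique (hw : IsPendantPath G k w) (hw' : IsPendantPath G k w')
    (hk : 1 ≤ k) (h0 : w 0 = w' 0) : w = w' := by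
  have key : ∀ j, ∀ hj : j < k + 1, w ⟨j, hj⟩ = w' ⟨j, hj⟩ := by
    intro j
    induction j using Nat.strong_induction_on with
    | _ j ih =>
      match j with
      | 0 => intro hj; simpa [Fin.mk_zero] using h0
      | 1 =>
        intro hj
        have h00 : w ⟨0, Nat.succ_pos k⟩ = w' ⟨0, Nat.succ_pos k⟩ := by
          simpa [Fin.mk_zero] using h0
        have hmem : w ⟨1, hj⟩ ∈ G.neighborFinset (w' ⟨0, Nat.succ_pos k⟩) := by
          rw [← h00, SimpleGraph.mem_neighborFinset]
          exact adj_succ hw (by omega)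
        rw [nbhd_zero hw' hk, Finset.mem_singleton] at hmem
        exact hmem
      | (m + 2) =>
        intro hj
        have ihm : w ⟨m, by omega⟩ = w' ⟨m, by omega⟩ := ih m (by omega) (by omega)
        have ihm1 : w ⟨m + 1, by omega⟩ = w' ⟨m + 1, by omega⟩ := ih (m + 1) (by omega) (by omega)
        have hN : G.neighborFinset (w ⟨m + 1, by omega⟩) =
            {w ⟨m, by omega⟩, w ⟨m + 2, by omega⟩} := by
          have h' := nbhd_mid hw (j := m + 1) (by omega) (by omega)
          simpa using h'
        have hN' : G.neighborFinset (w' ⟨m + 1, by omega⟩) =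
            {w' ⟨m, by omega⟩, w' ⟨m + 2, by omega⟩} := by
          have h' := nbhd_mid hw' (j := m + 1) (by omega) (by omega)
          simpa using h'
        have hmem : w' ⟨m + 2, hj⟩ ∈ G.neighborFinset (w ⟨m + 1, by omega⟩) := by
          rw [ihm1, SimpleGraph.mem_neighborFinset]
          exact adj_succ hw' (by omega)
        rw [hN] at hmem
        rcases Finset.mem_insert.mp hmem with h | h
        · exfalso
          rw [ihm] at h
          exact w_ne hw' (show m + 2 ≠ m by omega) h
        · exact (Finset.mem_singleton.mp h).symm
  funext j
  have := key j.1 j.2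
  simpa using this

noncomputable def xv (θ : ℝ) (j : ℕ) : ℝ := (-1) ^ j * Real.sin ((2 * j + 1) * θ)

lemma xv_rec (θ : ℝ) (j : ℕ) :
    xv θ j + xv θ (j + 2) = (2 - 4 * Real.cos θ ^ 2) * xv θ (j + 1) := by
  unfold xv
  push_cast
  rw [show (2 * ((j : ℝ) + 2) + 1) * θ = (2 * (j : ℝ) + 3) * θ + 2 * θ by ring,
    show (2 * (j : ℝ) + 1) * θ = (2 * (j : ℝ) + 3) * θ - 2 * θ by ring,
    show (2 * ((j : ℝ) + 1) + 1) * θ = (2 * (j : ℝ) + 3) * θ by ring,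
    Real.sin_add, Real.sin_sub, Real.cos_two_mul]
  ring

lemma xv_one (θ : ℝ) : xv θ 1 = (1 - 4 * Real.cos θ ^ 2) * xv θ 0 := by
  unfold xv
  push_cast
  rw [show (2 * (1 : ℝ) + 1) * θ = 3 * θ by ring, Real.sin_three_mul,
    show (2 * (0 : ℝ) + 1) * θ = θ by ring]
  linear_combination (4 * Real.sin θ) * (Real.sin_sq_add_cos_sq θ)

noncomputable def fvec (w : Fin (k + 1) → Fin n) (θ : ℝ) : Fin n → ℝ :=
  fun v => ∑ j : Fin (k + 1), if w j = v then xv θ j.1 else 0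

lemma fvec_apply (hinj : Function.Injective w) (θ : ℝ) (j : Fin (k + 1)) :
    fvec w θ (w j) = xv θ j.1 := by
  unfold fvec
  simp [hinj.eq_iff]

lemma fvec_zero (θ : ℝ) {v : Fin n} (hv : ∀ j, w j ≠ v) : fvec w θ v = 0 := by
  unfold fvec
  exact Finset.sum_eq_zero fun j _ => by simp [hv j]

lemma xv_last (θ : ℝ) (hsin : Real.sin ((2 * k + 1) * θ) = 0) : xv θ k = 0 := by
  unfold xv
  rw [hsin, mul_zero]

/-- Membership of path vertices in the neighborhood of the attachment vertex. -/
lemma mem_nbhd_last (hw : IsPendantPath G k w) (hk : 1 ≤ k) (j : Fin (k + 1)) :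
    w j ∈ G.neighborFinset (w (Fin.last k)) ↔ j.1 = k - 1 := by
  obtain ⟨m, hm⟩ := j
  simp only [Fin.val_mk]
  have hlast : Fin.last k = (⟨k, by omega⟩ : Fin (k + 1)) := rfl
  constructor
  · intro hmem
    rw [SimpleGraph.mem_neighborFinset] at hmem
    by_contra hne
    rcases Nat.lt_or_ge m 1 with h0 | h1
    · -- m = 0
      interval_cases m
      have : w (Fin.last k) ∈ G.neighborFinset (w ⟨0, by omega⟩) := by
        rw [SimpleGraph.mem_neighborFinset]
        exact hmem.symm
      rw [nbhd_zero hw hk, Finset.mem_singleton, hlast] at this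
      have h' := hw.1 this
      rw [Fin.mk_eq_mk] at h'
      omega
    · rcases Nat.lt_or_ge m k with h2 | h2
      · -- internal
        have : w (Fin.last k) ∈ G.neighborFinset (w ⟨m, by omega⟩) := by
          rw [SimpleGraph.mem_neighborFinset]
          exact hmem.symm
        rw [nbhd_mid hw h1 h2, Finset.mem_insert, Finset.mem_singleton, hlast] at this
        rcases this with h | h <;>
          · have h' := hw.1 h
            rw [Fin.mk_eq_mk] at h'
            omega
      · -- m = k
        have hmk : m = k := by omega
        subst hmk
        exact (G.irrefl (by rwa [hlast] at hmem)).elim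
  · intro hmk
    rw [SimpleGraph.mem_neighborFinset]
    have h' := adj_succ hw (show k - 1 < k by omega)
    have e1 : (⟨k - 1 + 1, by omega⟩ : Fin (k + 1)) = Fin.last k := by
      simp only [Fin.ext_iff, Fin.val_mk, Fin.val_last]; omega
    have e2 : (⟨k - 1, by omega⟩ : Fin (k + 1)) = ⟨m, hm⟩ := by
      rw [Fin.mk_eq_mk]; omega
    rw [e1, e2] at h'
    exact h'.symm

lemma lap_fvec (hw : IsPendantPath G k w) (hk : 1 ≤ k) (θ : ℝ)
    (hsin : Real.sin ((2 * k + 1) * θ) = 0) (v : Fin n) :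
    (G.lapMatrix ℝ *ᵥ fvec w θ) v =
      (4 * Real.cos θ ^ 2) * fvec w θ v +
        (if v = w (Fin.last k) then -(xv θ (k - 1)) else 0) := by
  classical
  rw [SimpleGraph.lapMatrix_mulVec_apply]
  by_cases hv : ∃ j : Fin (k + 1), w j = v
  · obtain ⟨⟨m, hm⟩, rfl⟩ := hv
    rcases Nat.lt_or_ge m 1 with h0 | h1
    · -- m = 0 : pendant vertex
      interval_cases m
      have hne : w ⟨0, by omega⟩ ≠ w (Fin.last k) := w_ne hw (by omega)
      rw [if_neg hne, nbhd_zero hw hk, Finset.sum_singleton, fvec_apply hw.1,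
        fvec_apply hw.1, deg0 hw]
      simp only [Fin.val_mk]
      push_cast
      linarith [xv_one θ]
    · rcases Nat.lt_or_ge m k with h2 | h2
      · -- internal vertex
        have hne : w ⟨m, hm⟩ ≠ w (Fin.last k) := w_ne hw (by omega)
        rw [if_neg hne, nbhd_mid hw h1 h2,
          Finset.sum_pair (w_ne hw (show m - 1 ≠ m + 1 by omega)),
          fvec_apply hw.1, fvec_apply hw.1, fvec_apply hw.1, deg_mid hw h1 h2]
        simp only [Fin.val_mk]
        obtain ⟨m', rfl⟩ : ∃ m', m = m' + 1 := ⟨m - 1, by omega⟩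
        have hrec := xv_rec θ m'
        simp only [Nat.add_sub_cancel]
        have e12 : m' + 1 + 1 = m' + 2 := rfl
        rw [e12]
        push_cast
        linarith
      · -- attachment vertex
        have hlast : (⟨m, hm⟩ : Fin (k + 1)) = Fin.last k := by
          simp only [Fin.ext_iff, Fin.val_mk, Fin.val_last]; omega
        rw [hlast, if_pos rfl, fvec_apply hw.1]
        have hxk : xv θ (Fin.last k).1 = 0 := by
          simpa using xv_last θ hsin
        rw [hxk, mul_zero, mul_zero, zero_sub, zero_add]
        congr 1
        unfold fvec
        rw [Finset.sum_comm]
        have : ∀ j : Fin (k + 1),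
            (∑ u ∈ G.neighborFinset (w (Fin.last k)), if w j = u then xv θ j.1 else 0)
              = if j = (⟨k - 1, by omega⟩ : Fin (k + 1)) then xv θ j.1 else 0 := by
          intro j
          rw [Finset.sum_ite_eq]
          congr 1
          rw [eq_iff_iff, mem_nbhd_last hw hk j, Fin.ext_iff, Fin.val_mk]
        rw [Finset.sum_congr rfl fun j _ => this j, Finset.sum_ite_eq']
        simp
  · -- off the path
    push_neg at hv
    have hz : fvec w θ v = 0 := fvec_zero θ hv
    have hne : v ≠ w (Fin.last k) := fun h => hv _ h.symm
    rw [hz, if_neg hne, mul_zero, mul_zero, zero_add, zero_sub, neg_eq_zero]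
    apply Finset.sum_eq_zero
    intro u hu
    by_cases hu' : ∃ j : Fin (k + 1), w j = u
    · obtain ⟨⟨m, hm⟩, rfl⟩ := hu'
      rcases Nat.lt_or_ge m 1 with h0 | h1
      · interval_cases m
        exfalso
        have : v ∈ G.neighborFinset (w ⟨0, by omega⟩) := by
          rw [SimpleGraph.mem_neighborFinset]
          exact ((SimpleGraph.mem_neighborFinset _ _ _).mp hu).symm
        rw [nbhd_zero hw hk, Finset.mem_singleton] at this
        exact hv _ this.symm
      · rcases Nat.lt_or_ge m k with h2 | h2
        · exfalso
          have : v ∈ G.neighborFinset (w ⟨m, hm⟩) := by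
            rw [SimpleGraph.mem_neighborFinset]
            exact ((SimpleGraph.mem_neighborFinset _ _ _).mp hu).symm
          rw [nbhd_mid hw h1 h2, Finset.mem_insert, Finset.mem_singleton] at this
          rcases this with h | h <;> exact hv _ h.symm
        · rw [fvec_apply hw.1]
          have hmk : (⟨m, hm⟩ : Fin (k + 1)).1 = k := by
            simp only [Fin.val_mk]; omega
          rw [hmk]
          exact xv_last θ hsin
    · push_neg at hu'
      exact fvec_zero θ hu'

lemma ne_pendant (hw : IsPendantPath G k w) (hw' : IsPendantPath G k w') (hk : 1 ≤ k)
    (hne : w ≠ w') (j : Fin (k + 1)) : w' j ≠ w ⟨0, Nat.succ_pos k⟩ := by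
  obtain ⟨m, hm⟩ := j
  intro h
  rcases Nat.lt_or_ge m 1 with h0 | h1
  · interval_cases m
    refine hne (pendant_unique hw hw' hk ?_)
    have := h.symm
    simpa [Fin.mk_zero] using this
  · have hdeg := deg0 hw
    rw [← h] at hdeg
    rcases Nat.lt_or_ge m k with h2 | h2
    · rw [deg_mid hw' h1 h2] at hdeg
      omega
    · have hml : (⟨m, hm⟩ : Fin (k + 1)) = Fin.last k := by
        simp only [Fin.ext_iff, Fin.val_mk, Fin.val_last]; omega
      rw [hml] at hdeg
      have := hw'.2.2.2.2
      omega

variable (G k) in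
@[reducible] def Pt := {w : Fin (k + 1) → Fin n // IsPendantPath G k w}

variable (G k) in
@[reducible] def Qt := {v : Fin n // 2 < G.degree v ∧
  ∃ w : Fin (k + 1) → Fin n, IsPendantPath G k w ∧ w (Fin.last k) = v}

noncomputable instance : Fintype (Pt G k) := Fintype.ofFinite _
noncomputable instance : Fintype (Qt G k) := Fintype.ofFinite _

lemma card_le_finrank (hk : 1 ≤ k) (θ : ℝ)
    (hsin : Real.sin ((2 * ↑k + 1) * θ) = 0) (hsinθ : Real.sin θ ≠ 0) :
    Nat.card (Pt G k) - Nat.card (Qt G k) ≤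
      Module.finrank ℝ (Module.End.eigenspace (Matrix.toLin' (G.lapMatrix ℝ))
        (4 * Real.cos θ ^ 2)) := by
  classical
  let T : ((Pt G k) → ℝ) →ₗ[ℝ] (Fin n → ℝ) :=
    { toFun := fun c v => ∑ p : Pt G k, c p * fvec p.1 θ v
      map_add' := by
        intro c d; funext v
        simp [add_mul, Finset.sum_add_distrib]
      map_smul' := by
        intro r c; funext v
        simp [Finset.mul_sum, mul_assoc] }
  let A : ((Pt G k) → ℝ) →ₗ[ℝ] ((Qt G k) → ℝ) :=
    { toFun := fun c q => ∑ p : Pt G k, c p * (if p.1 (Fin.last k) = q.1 then (1 : ℝ) else 0)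
      map_add' := by
        intro c d; funext q
        simp only [Pi.add_apply, add_mul]
        exact Finset.sum_add_distrib
      map_smul' := by
        intro r c; funext q
        simp only [RingHom.id_apply, Pi.smul_apply, smul_eq_mul, Finset.mul_sum, mul_assoc] }
  have hTc : ∀ c u, T c u = ∑ p : Pt G k, c p * fvec p.1 θ u := fun c u => rfl
  have hx0 : xv θ 0 = Real.sin θ := by unfold xv; norm_num
  have hTinj : Function.Injective T := by
    rw [injective_iff_map_eq_zero]
    intro c hc
    funext p
    have h0 := congrFun hc (p.1 ⟨0, Nat.succ_pos k⟩)
    rw [hTc, Finset.sum_eq_single p] at h0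
    · rw [fvec_apply p.2.1 θ ⟨0, Nat.succ_pos k⟩] at h0
      simp only [Fin.val_mk, hx0, Pi.zero_apply] at h0
      simpa using (mul_eq_zero.mp h0).resolve_right hsinθ
    · intro b _ hbp
      rw [fvec_zero θ (fun j => ne_pendant p.2 b.2 hk
        (fun h => hbp (Subtype.ext h).symm) j), mul_zero]
    · intro hp
      exact absurd (Finset.mem_univ p) hp
  have hker : ∀ c ∈ LinearMap.ker A, ∀ v : Fin n,
      (∑ p : Pt G k, c p * (if p.1 (Fin.last k) = v then (1 : ℝ) else 0)) = 0 := by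
    intro c hc v
    by_cases hv : 2 < G.degree v ∧
        ∃ w : Fin (k + 1) → Fin n, IsPendantPath G k w ∧ w (Fin.last k) = v
    · have h := congrFun (LinearMap.mem_ker.mp hc) (⟨v, hv⟩ : Qt G k)
      simpa [A] using h
    · refine Finset.sum_eq_zero fun p _ => ?_
      rw [if_neg, mul_zero]
      intro h
      exact hv ⟨h ▸ p.2.2.2.2.2, ⟨p.1, p.2, h⟩⟩
  have hmap : ∀ c ∈ LinearMap.ker A,
      T c ∈ Module.End.eigenspace (Matrix.toLin' (G.lapMatrix ℝ)) (4 * Real.cos θ ^ 2) := by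
    intro c hc
    rw [Module.End.mem_eigenspace_iff, Matrix.toLin'_apply]
    funext v
    have hswap : (G.lapMatrix ℝ *ᵥ T c) v
        = ∑ p : Pt G k, c p * ((G.lapMatrix ℝ *ᵥ fvec p.1 θ) v) := by
      simp only [Matrix.mulVec, dotProduct, hTc, Finset.mul_sum]
      rw [Finset.sum_comm]
      refine Finset.sum_congr rfl fun p _ => ?_
      refine Finset.sum_congr rfl fun u _ => ?_
      ring
    have hdefect : ∑ p : Pt G k,
        c p * (if v = p.1 (Fin.last k) then -(xv θ (k - 1)) else 0) = 0 := by
      have h0 := hker c hc v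
      calc ∑ p : Pt G k, c p * (if v = p.1 (Fin.last k) then -(xv θ (k - 1)) else 0)
          = -(xv θ (k - 1)) *
              ∑ p : Pt G k, c p * (if p.1 (Fin.last k) = v then (1 : ℝ) else 0) := by
            rw [Finset.mul_sum]
            refine Finset.sum_congr rfl fun p _ => ?_
            by_cases h : p.1 (Fin.last k) = v
            · rw [if_pos h, if_pos h.symm]; ring
            · rw [if_neg h, if_neg fun hh => h hh.symm]; ring
        _ = 0 := by rw [h0, mul_zero]
    rw [hswap]
    calc ∑ p : Pt G k, c p * ((G.lapMatrix ℝ *ᵥ fvec p.1 θ) v)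
        = ∑ p : Pt G k, ((4 * Real.cos θ ^ 2) * (c p * fvec p.1 θ v)
            + c p * (if v = p.1 (Fin.last k) then -(xv θ (k - 1)) else 0)) := by
          refine Finset.sum_congr rfl fun p _ => ?_
          rw [lap_fvec p.2 hk θ hsin v]; ring
      _ = (4 * Real.cos θ ^ 2) * (∑ p : Pt G k, c p * fvec p.1 θ v)
            + ∑ p : Pt G k, c p * (if v = p.1 (Fin.last k) then -(xv θ (k - 1)) else 0) := by
          rw [Finset.sum_add_distrib, Finset.mul_sum]
      _ = ((4 * Real.cos θ ^ 2) • T c) v := by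
          rw [hdefect, add_zero, Pi.smul_apply, smul_eq_mul, hTc]
  have h1 : (LinearMap.ker A).map T ≤
      Module.End.eigenspace (Matrix.toLin' (G.lapMatrix ℝ)) (4 * Real.cos θ ^ 2) := by
    rintro x hx
    rw [Submodule.mem_map] at hx
    obtain ⟨c, hc, rfl⟩ := hx
    exact hmap c hc
  have h2 : Module.finrank ℝ (LinearMap.ker A)
      = Module.finrank ℝ ((LinearMap.ker A).map T) :=
    LinearEquiv.finrank_eq (Submodule.equivMapOfInjective T hTinj _)
  have h3 := Submodule.finrank_mono h1
  have h4 := LinearMap.finrank_range_add_finrank_ker A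
  have h5 : Module.finrank ℝ (LinearMap.range A)
      ≤ Module.finrank ℝ ((Qt G k) → ℝ) := (LinearMap.range A).finrank_le
  rw [Module.finrank_fintype_fun_eq_card] at h4
  rw [Module.finrank_fintype_fun_eq_card] at h5
  rw [Nat.card_eq_fintype_card, Nat.card_eq_fintype_card]
  omega

end Stmt8Aux

theorem stmt8 {n : ℕ} (G : SimpleGraph (Fin n)) [DecidableRel G.Adj]
    (k i : ℕ) (hk : 1 ≤ k) (hi1 : 1 ≤ i) (hik : i ≤ k) :
    pk G k - qk G k ≤
      mult (G.lapMatrix ℝ) (4 * Real.cos (Real.pi * i / (2 * k + 1)) ^ 2) := by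
  set θ : ℝ := Real.pi * ↑i / (2 * ↑k + 1) with hθ
  have h2k : (0 : ℝ) < 2 * (k : ℝ) + 1 := by positivity
  have hipos : (0 : ℝ) < i := by exact_mod_cast hi1
  have hθpos : 0 < θ := by
    rw [hθ]
    exact div_pos (mul_pos Real.pi_pos hipos) h2k
  have hθlt : θ < Real.pi := by
    rw [hθ, div_lt_iff₀ h2k]
    have hik' : (i : ℝ) ≤ k := by exact_mod_cast hik
    nlinarith [Real.pi_pos]
  have hsinθ : Real.sin θ ≠ 0 := ne_of_gt (Real.sin_pos_of_pos_of_lt_pi hθpos hθlt)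
  have hsin : Real.sin ((2 * (k : ℝ) + 1) * θ) = 0 := by
    have hne : (2 * (k : ℝ) + 1) ≠ 0 := ne_of_gt h2k
    have he : (2 * (k : ℝ) + 1) * θ = i * Real.pi := by
      rw [hθ]; field_simp
    rw [he]
    exact Real.sin_nat_mul_pi i
  exact Stmt8Aux.card_le_finrank (G := G) hk θ hsin hsinθ
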